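/- Let W be a vector space over a field F and let k, s be positive integers. The number of Freiman s-isomorphism classes of subsets of W of cardinality k is at most k^{2sk}. -/

import Mathlib

open Finset

section Aux

/-- Weight vector of a tuple `u : Fin s → Fin k` over a field `F`. -/
private noncomputable def chiF (F : Type*) [Field F] {s k : ℕ} (u : Fin s → Fin k) :
    Fin k → F :=
  fun j => ((Finset.univ.filter fun i => u i = j).card : F)

private lemma sum_eq_chi {F W : Type*} [Field F] [AddCommGroup W] [Module F W]
    {s k : ℕ} (e : Fin k → W) (u : Fin s → Fin k) :
    ∑ i, e (u i) = ∑ j, chiF F u j • e j := by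
  classical
  rw [← Finset.sum_fiberwise' Finset.univ u e]
  refine Finset.sum_congr rfl fun j _ => ?_
  rw [Finset.sum_const, chiF, Nat.cast_smul_eq_nsmul]

/-- Difference characterization. -/
private lemma sum_eq_iff {F W : Type*} [Field F] [AddCommGroup W] [Module F W]
    {s k : ℕ} (e : Fin k → W) (u v : Fin s → Fin k) :
    (∑ i, e (u i)) = ∑ i, e (v i) ↔ ∑ j, (chiF F u - chiF F v) j • e j = 0 := by
  rw [sum_eq_chi (F := F) e u, sum_eq_chi (F := F) e v, ← sub_eq_zero, ← Finset.sum_sub_distrib]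
  simp [sub_smul]

/-- Representing multisets supported in the range of an enumeration by tuples. -/
private lemma exists_tuple {W : Type*} [AddCommMonoid W] {k : ℕ} (e : Fin k → W)
    (A : Set W) (hsurj : ∀ a ∈ A, ∃ i, e i = a) :
    ∀ (s : ℕ) (σ : Multiset W), Multiset.card σ = s → (∀ x ∈ σ, x ∈ A) →
      ∃ u : Fin s → Fin k, ∀ f : W → W, (σ.map f).sum = ∑ i, f (e (u i)) := by
  classical
  intro s
  induction s with
  | zero =>
    intro σ hcard _
    refine ⟨Fin.elim0, fun f => ?_⟩
    rw [Multiset.card_eq_zero.1 hcard]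
    simp
  | succ n ih =>
    intro σ hcard hmem
    obtain ⟨x, hx⟩ := Multiset.card_pos_iff_exists_mem.1 (by rw [hcard]; exact n.succ_pos)
    obtain ⟨i0, hi0⟩ := hsurj x (hmem x hx)
    have hσ : σ = x ::ₘ σ.erase x := (Multiset.cons_erase hx).symm
    have hc' : Multiset.card (σ.erase x) = n := by
      rw [Multiset.card_erase_of_mem hx, hcard]; rfl
    obtain ⟨u', hu'⟩ := ih (σ.erase x) hc' (fun y hy => hmem y (Multiset.mem_of_mem_erase hy))
    refine ⟨Fin.cases i0 u', fun f => ?_⟩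
    rw [hσ, Multiset.map_cons, Multiset.sum_cons, Fin.sum_univ_succ, hu' f]
    simp [hi0]

/-- Construct a Freiman isomorphism from matching enumerations. -/
private lemma freiman_of_match {W : Type*} [AddCommGroup W] {k s : ℕ}
    (A B : Finset W) (eA eB : Fin k → W)
    (hAmem : ∀ i, eA i ∈ A) (hBmem : ∀ i, eB i ∈ B)
    (hAsur : ∀ a ∈ A, ∃ i, eA i = a) (hBsur : ∀ b ∈ B, ∃ i, eB i = b)
    (hAinj : Function.Injective eA) (hBinj : Function.Injective eB)
    (hmatch : ∀ u v : Fin s → Fin k,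
      ((∑ i, eA (u i)) = ∑ i, eA (v i)) ↔ ((∑ i, eB (u i)) = ∑ i, eB (v i))) :
    ∃ f : W → W, IsAddFreimanIso s (A : Set W) (B : Set W) f := by
  classical
  set f : W → W := fun w => if h : ∃ i, eA i = w then eB (Classical.choose h) else w with hf
  have hfe : ∀ i, f (eA i) = eB i := by
    intro i
    have h : ∃ j, eA j = eA i := ⟨i, rfl⟩
    simp only [hf, dif_pos h]
    exact congrArg eB (hAinj (Classical.choose_spec h))
  have hAsur' : ∀ a ∈ (A : Set W), ∃ i, eA i = a := fun a ha => hAsur a ha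
  have hBsur' : ∀ b ∈ (B : Set W), ∃ i, eB i = b := fun b hb => hBsur b hb
  refine ⟨f, ⟨⟨?_, ?_, ?_⟩, ?_⟩⟩
  · intro a ha
    obtain ⟨i, rfl⟩ := hAsur' a ha
    rw [hfe]
    exact hBmem i
  · intro a ha a' ha' hfa
    obtain ⟨i, rfl⟩ := hAsur' a ha
    obtain ⟨i', rfl⟩ := hAsur' a' ha'
    rw [hfe, hfe] at hfa
    rw [hBinj hfa]
  · intro b hb
    obtain ⟨i, rfl⟩ := hBsur' b hb
    exact ⟨eA i, hAmem i, hfe i⟩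
  · intro σ τ hσA hτA hσc hτc
    obtain ⟨u, hu⟩ := exists_tuple eA (A : Set W) hAsur' s σ hσc hσA
    obtain ⟨v, hv⟩ := exists_tuple eA (A : Set W) hAsur' s τ hτc hτA
    have hσ : σ.sum = ∑ i, eA (u i) := by simpa using hu id
    have hτ : τ.sum = ∑ i, eA (v i) := by simpa using hv id
    have hσf : (σ.map f).sum = ∑ i, eB (u i) := by
      rw [hu f]; exact Finset.sum_congr rfl fun i _ => hfe (u i)
    have hτf : (τ.map f).sum = ∑ i, eB (v i) := by
      rw [hv f]; exact Finset.sum_congr rfl fun i _ => hfe (v i)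
    rw [hσ, hτ, hσf, hτf]
    exact (hmatch u v).symm

end Aux

theorem count_freiman_iso_classes {F W : Type*} [Field F] [AddCommGroup W] [Module F W]
    (s k : ℕ) (hs : 1 ≤ s) (hk : 1 ≤ k) :
    ∃ reps : Finset (Finset W), reps.card ≤ k ^ (2 * s * k) ∧
      ∀ A : Finset W, A.card = k →
        ∃ X ∈ reps, ∃ f : W → W, IsAddFreimanIso s (A : Set W) (X : Set W) f := by
  classical
  -- enumerations of k-element subsets
  let P := {A : Finset W // A.card = k}
  let enum : P → Fin k → W := fun A i => ((A.1.equivFin.symm (Fin.cast A.2.symm i)) : W)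
  have hmem : ∀ (A : P) (i : Fin k), enum A i ∈ A.1 := fun A i =>
    (A.1.equivFin.symm (Fin.cast A.2.symm i)).2
  have hinj : ∀ A : P, Function.Injective (enum A) := by
    intro A i j hij
    have h1 : A.1.equivFin.symm (Fin.cast A.2.symm i) = A.1.equivFin.symm (Fin.cast A.2.symm j) :=
      Subtype.ext hij
    have h2 := A.1.equivFin.symm.injective h1
    simpa [Fin.ext_iff] using h2
  have hsur : ∀ (A : P), ∀ a ∈ A.1, ∃ i, enum A i = a := by
    intro A a ha
    refine ⟨Fin.cast A.2 (A.1.equivFin ⟨a, ha⟩), ?_⟩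
    have : Fin.cast A.2.symm (Fin.cast A.2 (A.1.equivFin ⟨a, ha⟩)) = A.1.equivFin ⟨a, ha⟩ :=
      Fin.ext rfl
    simp only [enum, this, Equiv.symm_apply_apply]
  -- the finite set of potential relation vectors
  let D : Finset (Fin k → F) :=
    Finset.image (fun p : (Fin s → Fin k) × (Fin s → Fin k) => chiF F p.1 - chiF F p.2)
      Finset.univ
  have hD0 : (0 : Fin k → F) ∈ D := by
    refine Finset.mem_image.2 ⟨⟨fun _ => ⟨0, hk⟩, fun _ => ⟨0, hk⟩⟩, Finset.mem_univ _, ?_⟩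
    simp
  have hDchi : ∀ u v : Fin s → Fin k, chiF F u - chiF F v ∈ D := fun u v =>
    Finset.mem_image.2 ⟨(u, v), Finset.mem_univ _, rfl⟩
  -- the kernel relations of a set
  let kerF : P → Finset (Fin k → F) := fun A => D.filter (fun d => ∑ j, d j • enum A j = 0)
  have hchar : ∀ (A : P) (d : Fin k → F), d ∈ D →
      ((∑ j, d j • enum A j = 0) ↔ d ∈ Submodule.span F ((kerF A : Set (Fin k → F)))) := by
    intro A d hd
    constructor
    · intro h
      exact Submodule.subset_span (Finset.mem_coe.2 (Finset.mem_filter.2 ⟨hd, h⟩))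
    · intro h
      have hle : Submodule.span F ((kerF A : Set (Fin k → F))) ≤
          LinearMap.ker (Fintype.linearCombination F (enum A)) := by
        rw [Submodule.span_le]
        intro x hx
        have hx' := (Finset.mem_filter.1 (Finset.mem_coe.1 hx)).2
        simpa [LinearMap.mem_ker, Fintype.linearCombination_apply] using hx'
      have := hle h
      simpa [LinearMap.mem_ker, Fintype.linearCombination_apply] using this
  -- span equality implies Freiman isomorphism
  have hmatch : ∀ A B : P,
      Submodule.span F ((kerF A : Set (Fin k → F))) = Submodule.span F ((kerF B : Set (Fin k → F))) →
      ∃ f : W → W, IsAddFreimanIso s (A.1 : Set W) (B.1 : Set W) f := by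
    intro A B hspan
    refine freiman_of_match A.1 B.1 (enum A) (enum B) (hmem A) (hmem B) (hsur A) (hsur B)
      (hinj A) (hinj B) ?_
    intro u v
    rw [sum_eq_iff (F := F) (enum A) u v, sum_eq_iff (F := F) (enum B) u v,
      hchar A _ (hDchi u v), hchar B _ (hDchi u v), hspan]
  -- the invariant: a spanning k-tuple of relation vectors from D
  have hinv : ∀ A : P, ∃ g : Fin k → (Fin k → F), (∀ i, g i ∈ D) ∧
      Submodule.span F (Set.range g) = Submodule.span F ((kerF A : Set (Fin k → F))) := by
    intro A
    obtain ⟨b, hbsub, hbspan, hbli⟩ :=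
      exists_linearIndependent F ((kerF A : Set (Fin k → F)))
    have hbfin : b.Finite := (kerF A).finite_toSet.subset hbsub
    let S : Finset (Fin k → F) := hbfin.toFinset
    have hScoe : (S : Set (Fin k → F)) = b := hbfin.coe_toFinset
    letI : Fintype b := hbfin.fintype
    have hcard : S.card ≤ k := by
      rw [Set.Finite.card_toFinset]
      have h1 := hbli.fintype_card_le_finrank
      rwa [Module.finrank_pi, Fintype.card_fin] at h1
    let l := S.toList
    have hlenS : l.length = S.card := S.length_toList
    have hlen : l.length ≤ k := hlenS.le.trans hcard
    refine ⟨fun i => if h : (i : ℕ) < l.length then l.get ⟨i, h⟩ else 0, fun i => ?_, ?_⟩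
    · by_cases h : (i : ℕ) < l.length
      · simp only [dif_pos h]
        have : l.get ⟨i, h⟩ ∈ S := Finset.mem_toList.1 (l.get_mem _)
        have hb : l.get ⟨(i : ℕ), h⟩ ∈ b := by
          rw [← hScoe]; exact Finset.mem_coe.2 this
        exact (Finset.mem_filter.1 (hbsub hb)).1
      · simp only [dif_neg h]; exact hD0
    · rw [← hbspan]
      apply le_antisymm
      · rw [Submodule.span_le]
        rintro x ⟨i, rfl⟩
        by_cases h : (i : ℕ) < l.length
        · simp only [dif_pos h]
          have : l.get ⟨i, h⟩ ∈ S := Finset.mem_toList.1 (l.get_mem _)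
          have hb : l.get ⟨(i : ℕ), h⟩ ∈ b := by rw [← hScoe]; exact Finset.mem_coe.2 this
          exact Submodule.subset_span hb
        · simp only [dif_neg h]
          exact Submodule.zero_mem _
      · rw [Submodule.span_le]
        intro x hx
        have hxS : x ∈ S := by rw [← hScoe] at hx; exact Finset.mem_coe.1 hx
        obtain ⟨j, hj⟩ := List.mem_iff_get.1 (Finset.mem_toList.2 hxS)
        have hjk : (j : ℕ) < k := lt_of_lt_of_le j.2 hlen
        refine Submodule.subset_span ⟨⟨(j : ℕ), hjk⟩, ?_⟩
        have hjl : ((⟨(j : ℕ), hjk⟩ : Fin k) : ℕ) < l.length := j.2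
        simp only [dif_pos hjl]
        rw [← hj]
  let Φ : P → (Fin k → (Fin k → F)) := fun A => (hinv A).choose
  have hΦD : ∀ (A : P) (i : Fin k), Φ A i ∈ D := fun A => (hinv A).choose_spec.1
  have hΦspan : ∀ A : P,
      Submodule.span F (Set.range (Φ A)) = Submodule.span F ((kerF A : Set (Fin k → F))) :=
    fun A => (hinv A).choose_spec.2
  let T : Finset (Fin k → (Fin k → F)) := Fintype.piFinset (fun _ : Fin k => D)
  let rep : (Fin k → (Fin k → F)) → Finset W := fun t =>
    if h : ∃ A : P, Φ A = t then (Classical.choose h).1 else ∅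
  refine ⟨T.image rep, ?_, ?_⟩
  · refine (Finset.card_image_le).trans ?_
    have hT : T.card = D.card ^ k := by
      rw [Fintype.card_piFinset]
      simp
    have hD : D.card ≤ k ^ s * k ^ s := by
      refine (Finset.card_image_le).trans ?_
      rw [Finset.card_univ]
      simp [Fintype.card_fun]
    rw [hT]
    calc D.card ^ k ≤ (k ^ s * k ^ s) ^ k := Nat.pow_le_pow_left hD k
      _ = k ^ (2 * s * k) := by rw [← pow_add, ← pow_mul, two_mul]
  · intro A hA
    set AP : P := ⟨A, hA⟩ with hAP
    have ht : Φ AP ∈ T := Fintype.mem_piFinset.2 (hΦD AP)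
    have hex : ∃ B : P, Φ B = Φ AP := ⟨AP, rfl⟩
    refine ⟨rep (Φ AP), Finset.mem_image_of_mem _ ht, ?_⟩
    have hrep : rep (Φ AP) = (Classical.choose hex).1 := dif_pos hex
    rw [hrep]
    refine hmatch AP (Classical.choose hex) ?_
    rw [← hΦspan, ← hΦspan, Classical.choose_spec hex]
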